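/- Assume H_X Sᵀ = T H_G. Let d ≥ 1 and suppose the memory has distance at least d in the following sense: every e ∈ 𝔽₂^n with H_X eᵀ = 0 and J_X eᵀ ≠ 0 satisfies |e| ≥ d, and every e ∈ 𝔽₂^n with H_Z eᵀ = 0 and J_Z eᵀ ≠ 0 satisfies |e| ≥ d. Let w ≥ 1 be a natural number such that |uS| ≤ w·|u| for all u ∈ 𝔽₂^{n_G}. Then: (a) every e with H^{MB}_X eᵀ = 0 and J^{MB}_X eᵀ ≠ 0 satisfies w·|e| ≥ d; (b) every e with H^{MB}_Z eᵀ = 0 and J^{MB}_Z eᵀ ≠ 0 satisfies |e| ≥ d. In particular the branch-sticker deformed code has distance at least d/w, independently of d_R. -/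

import Mathlib

open Matrix

/-- The `X`-check matrix of the branch-sticker deformed code, with `d_R = m + 1`.
Column blocks: `u_0` (`Fin n`), `u_1,…,u_m` (`Fin m × Fin nG`, index `j0` is `u_{j0+1}`;
`u_m = u_{d_R-1}` is the open boundary), `v_1,…,v_m` (`Fin m × Fin rG`, index `i0` is
`v_{i0+1}`). -/
def HMBX (m : ℕ) {n nG rX rG : ℕ} (HX : Matrix (Fin rX) (Fin n) (ZMod 2))
    (HG : Matrix (Fin rG) (Fin nG) (ZMod 2))
    (T : Matrix (Fin rX) (Fin rG) (ZMod 2)) :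
    Matrix (Fin rX ⊕ Fin m × Fin rG)
      (Fin n ⊕ (Fin m × Fin nG ⊕ Fin m × Fin rG)) (ZMod 2) :=
  Matrix.of fun r c =>
    match r, c with
    | Sum.inl a, Sum.inl j => HX a j
    | Sum.inl _, Sum.inr (Sum.inl _) => 0
    | Sum.inl a, Sum.inr (Sum.inr (i, b)) => if (i : ℕ) = 0 then T a b else 0
    | Sum.inr _, Sum.inl _ => 0
    | Sum.inr (j0, a), Sum.inr (Sum.inl (j', c')) => if j' = j0 then HG a c' else 0
    | Sum.inr (j0, a), Sum.inr (Sum.inr (i, b)) =>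
        if ((i : ℕ) = (j0 : ℕ) ∨ (i : ℕ) = (j0 : ℕ) + 1) ∧ b = a then 1 else 0

/-- The `Z`-check matrix of the branch-sticker deformed code, with `d_R = m + 1`.
Row blocks: memory `Z` checks (`Fin rZ`) and sticker `Z` checks `i = 1,…,m`
(`Fin m × Fin nG`, index `i0` is check row `i0+1`). -/
def HMBZ (m : ℕ) {n nG rZ rG : ℕ} (HZ : Matrix (Fin rZ) (Fin n) (ZMod 2))
    (HG : Matrix (Fin rG) (Fin nG) (ZMod 2))
    (S : Matrix (Fin nG) (Fin n) (ZMod 2)) :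
    Matrix (Fin rZ ⊕ Fin m × Fin nG)
      (Fin n ⊕ (Fin m × Fin nG ⊕ Fin m × Fin rG)) (ZMod 2) :=
  Matrix.of fun r c =>
    match r, c with
    | Sum.inl a, Sum.inl j => HZ a j
    | Sum.inl _, Sum.inr _ => 0
    | Sum.inr (i, cc), Sum.inl j => if (i : ℕ) = 0 then S cc j else 0
    | Sum.inr (i, cc), Sum.inr (Sum.inl (j0, c')) =>
        if ((j0 : ℕ) + 1 = (i : ℕ) ∨ (j0 : ℕ) = (i : ℕ)) ∧ c' = cc then 1 else 0
    | Sum.inr (i, cc), Sum.inr (Sum.inr (i', b)) =>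
        if (i' : ℕ) = (i : ℕ) then HG b cc else 0


/-- The `X` logical generator matrix of the branch-sticker deformed code:
`J_X` in block `u_0`, `J_X Sᵀ` in each block `u_j`, zero in all `v` blocks. -/
def JMBX (m : ℕ) {n nG rG k : ℕ} (JX : Matrix (Fin k) (Fin n) (ZMod 2))
    (S : Matrix (Fin nG) (Fin n) (ZMod 2)) :
    Matrix (Fin k) (Fin n ⊕ (Fin m × Fin nG ⊕ Fin m × Fin rG)) (ZMod 2) :=
  Matrix.of fun a c =>
    match c with
    | Sum.inl j => JX a j
    | Sum.inr (Sum.inl (_, c')) => (JX * Sᵀ) a c'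
    | Sum.inr (Sum.inr _) => 0

/-- The `Z` logical generator matrix of the branch-sticker deformed code:
`J_Z` in block `u_0`, zero elsewhere. -/
def JMBZ (m nG rG : ℕ) {n k : ℕ} (JZ : Matrix (Fin k) (Fin n) (ZMod 2)) :
    Matrix (Fin k) (Fin n ⊕ (Fin m × Fin nG ⊕ Fin m × Fin rG)) (ZMod 2) :=
  Matrix.of fun a c =>
    match c with
    | Sum.inl j => JZ a j
    | Sum.inr _ => 0

/-- Hamming weight of a vector. -/
def wt {ι : Type*} [Fintype ι] (v : ι → ZMod 2) : ℕ :=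
  (Finset.univ.filter fun i => v i ≠ 0).card


section Helpers
open Matrix

lemma wt_eq_sum' {ι : Type*} [Fintype ι] (v : ι → ZMod 2) :
    wt v = ∑ i, if v i ≠ 0 then 1 else 0 := Finset.card_filter _ _

lemma wt_sum_type {ι κ : Type*} [Fintype ι] [Fintype κ] (v : ι ⊕ κ → ZMod 2) :
    wt v = wt (fun i => v (Sum.inl i)) + wt (fun j => v (Sum.inr j)) := by
  simp [wt_eq_sum', Fintype.sum_sum_type]

lemma wt_prod_type {ι κ : Type*} [Fintype ι] [Fintype κ] (v : ι × κ → ZMod 2) :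
    wt v = ∑ i, wt (fun j => v (i, j)) := by
  simp [wt_eq_sum', Fintype.sum_prod_type]

lemma wt_add_le {ι : Type*} [Fintype ι] (a b : ι → ZMod 2) :
    wt (a + b) ≤ wt a + wt b := by
  simp only [wt_eq_sum', ← Finset.sum_add_distrib]
  apply Finset.sum_le_sum
  intro i _
  by_cases ha : a i = 0 <;> by_cases hb : b i = 0 <;>
    simp [Pi.add_apply, ha, hb] <;> split <;> omega

lemma wt_zero {ι : Type*} [Fintype ι] : wt (0 : ι → ZMod 2) = 0 := by
  simp [wt]

lemma wt_sum_le {ι α : Type*} [Fintype ι] (s : Finset α) (g : α → ι → ZMod 2) :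
    wt (∑ t ∈ s, g t) ≤ ∑ t ∈ s, wt (g t) := by
  classical
  induction s using Finset.induction with
  | empty => simp [wt_zero]
  | insert _ _ h ih =>
    rename_i a s
    rw [Finset.sum_insert h, Finset.sum_insert h]
    exact le_trans (wt_add_le _ _) (by omega)

lemma mulVec_sum' {p q : ℕ} {α : Type*} (A : Matrix (Fin p) (Fin q) (ZMod 2)) (s : Finset α)
    (g : α → Fin q → ZMod 2) :
    A.mulVec (∑ t ∈ s, g t) = ∑ t ∈ s, A.mulVec (g t) := by
  ext i
  simp [Matrix.mulVec, dotProduct, Finset.mul_sum]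
  exact Finset.sum_comm

lemma ite_or_add {p q : Prop} [Decidable p] [Decidable q] (h : ¬(p ∧ q)) (x : ZMod 2) :
    (if p ∨ q then x else 0) = (if p then x else 0) + (if q then x else 0) := by
  by_cases hp : p <;> by_cases hq : q <;> simp_all

end Helpers

/-- distance bound for the branch-sticker deformed code
(`d_R = m + 1`). If the memory has distance at least `d` and `|uS| ≤ w |u|`, then
(a) every `X`-type logical error `e` of the deformed code satisfies `w·|e| ≥ d`, and
(b) every `Z`-type logical error `e` satisfies `|e| ≥ d`; hence the deformed code
has distance at least `d/w`, independently of `d_R`. -/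
theorem branch_sticker_distance (m : ℕ) (hm : 1 ≤ m) {n nG rX rZ rG k : ℕ}
    (HX : Matrix (Fin rX) (Fin n) (ZMod 2))
    (HZ : Matrix (Fin rZ) (Fin n) (ZMod 2))
    (HG : Matrix (Fin rG) (Fin nG) (ZMod 2))
    (S : Matrix (Fin nG) (Fin n) (ZMod 2))
    (T : Matrix (Fin rX) (Fin rG) (ZMod 2))
    (JX JZ : Matrix (Fin k) (Fin n) (ZMod 2))
    (hcompat : HX * Sᵀ = T * HG)
    (d : ℕ) (hd : 1 ≤ d)
    (hdX : ∀ e : Fin n → ZMod 2, HX.mulVec e = 0 → JX.mulVec e ≠ 0 → d ≤ wt e)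
    (hdZ : ∀ e : Fin n → ZMod 2, HZ.mulVec e = 0 → JZ.mulVec e ≠ 0 → d ≤ wt e)
    (w : ℕ) (hw : 1 ≤ w)
    (hwS : ∀ u : Fin nG → ZMod 2, wt (vecMul u S) ≤ w * wt u) :
    (∀ e : Fin n ⊕ (Fin m × Fin nG ⊕ Fin m × Fin rG) → ZMod 2,
      (HMBX m HX HG T).mulVec e = 0 → (JMBX m JX S (rG := rG)).mulVec e ≠ 0 →
        d ≤ w * wt e) ∧
    (∀ e : Fin n ⊕ (Fin m × Fin nG ⊕ Fin m × Fin rG) → ZMod 2,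
      (HMBZ m HZ HG S).mulVec e = 0 → (JMBZ m nG rG JZ).mulVec e ≠ 0 →
        d ≤ wt e) := by
  haveI : NeZero m := ⟨Nat.one_le_iff_ne_zero.mp hm⟩
  constructor
  · intro e hH hJ
    set e0 : Fin n → ZMod 2 := fun j => e (Sum.inl j) with he0
    set U : Fin m → Fin nG → ZMod 2 := fun t c => e (Sum.inr (Sum.inl (t, c))) with hU
    set V : Fin m → Fin rG → ZMod 2 := fun t b => e (Sum.inr (Sum.inr (t, b))) with hV
    set F : ℕ → Fin rG → ZMod 2 := fun t => if h : t < m then V ⟨t, h⟩ else 0 with hF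
    have h1 : HX.mulVec e0 + T.mulVec (V 0) = 0 := by
      funext a
      have h := congrFun hH (Sum.inl a)
      simp only [HMBX, Matrix.mulVec, dotProduct, Fintype.sum_sum_type, Fintype.sum_prod_type,
        Matrix.of_apply, Pi.zero_apply, ite_mul, zero_mul, Finset.sum_const_zero, mul_ite,
        mul_zero, add_zero, zero_add] at h
      rw [Finset.sum_eq_single (0 : Fin m) (fun x _ hx => by
          simp [show ¬((x : ℕ) = 0) from fun hc => hx (Fin.ext hc)])
        (fun hc => absurd (Finset.mem_univ _) hc)] at h
      simpa [Matrix.mulVec, dotProduct, he0, hV] using h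
    have h2 : ∀ (j0 : Fin m) (a : Fin rG),
        HG.mulVec (U j0) a = F (j0 : ℕ) a + F ((j0 : ℕ) + 1) a := by
      intro j0 a
      have h := congrFun hH (Sum.inr (j0, a))
      simp only [HMBX, Matrix.mulVec, dotProduct, Fintype.sum_sum_type, Fintype.sum_prod_type,
        Matrix.of_apply, Pi.zero_apply, ite_mul, zero_mul, one_mul, Finset.sum_const_zero,
        mul_ite, mul_zero, add_zero, zero_add] at h
      have e1 : ∀ x : Fin m, (∑ x1 : Fin nG, if x = j0 then HG a x1 * e (Sum.inr (Sum.inl (x, x1))) else 0)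
          = if x = j0 then HG.mulVec (U j0) a else 0 := by
        intro x
        by_cases hx : x = j0 <;> simp [hx, Matrix.mulVec, dotProduct, hU]
      rw [Finset.sum_congr rfl (fun x _ => e1 x), Finset.sum_ite_eq' Finset.univ j0,
        if_pos (Finset.mem_univ _)] at h
      have e2 : ∀ x : Fin m, (∑ x1 : Fin rG,
            if ((x : ℕ) = (j0 : ℕ) ∨ (x : ℕ) = (j0 : ℕ) + 1) ∧ x1 = a
              then e (Sum.inr (Sum.inr (x, x1))) else 0)
          = (if (x : ℕ) = (j0 : ℕ) then V x a else 0)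
            + (if (x : ℕ) = (j0 : ℕ) + 1 then V x a else 0) := by
        intro x
        rw [← ite_or_add (by omega)]
        by_cases hx : (x : ℕ) = (j0 : ℕ) ∨ (x : ℕ) = (j0 : ℕ) + 1
        · simp [hx, hV, Finset.sum_ite_eq' Finset.univ a]
        · simp [hx]
      rw [Finset.sum_congr rfl (fun x _ => e2 x), Finset.sum_add_distrib] at h
      have e3 : (∑ x : Fin m, if (x : ℕ) = (j0 : ℕ) then V x a else 0) = F (j0 : ℕ) a := by
        rw [Finset.sum_eq_single j0 (fun x _ hx => by
            simp [show ¬((x : ℕ) = (j0 : ℕ)) from fun hc => hx (Fin.ext hc)])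
          (fun hc => absurd (Finset.mem_univ _) hc)]
        simp [hF, j0.isLt]
      have e4 : (∑ x : Fin m, if (x : ℕ) = (j0 : ℕ) + 1 then V x a else 0)
          = F ((j0 : ℕ) + 1) a := by
        by_cases hlt : (j0 : ℕ) + 1 < m
        · rw [Finset.sum_eq_single (⟨(j0 : ℕ) + 1, hlt⟩ : Fin m) (fun x _ hx => by
              simp only [ite_eq_right_iff]
              intro hc
              exact absurd (Fin.ext hc) hx)
            (fun hc => absurd (Finset.mem_univ _) hc)]
          simp [hF, hlt]
        · rw [Finset.sum_eq_zero (fun x _ => by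
            simp [show ¬((x : ℕ) = (j0 : ℕ) + 1) from fun hc => hlt (hc ▸ x.isLt)])]
          simp [hF, hlt]
      rw [e3, e4] at h
      have h' : HG.mulVec (U j0) a + (F (j0 : ℕ) a + F ((j0 : ℕ) + 1) a) = 0 := by
        rw [← h]; try ring
      rw [CharTwo.add_eq_iff_eq_add, zero_add] at h'
      exact h' 
    have hsum : (∑ t : Fin m, HG.mulVec (U t)) = V 0 := by
      funext a
      rw [Finset.sum_apply]
      have : (∑ t : Fin m, HG.mulVec (U t) a)
          = ∑ t ∈ Finset.range m, (F (t + 1) a - F t a) := by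
        rw [← Fin.sum_univ_eq_sum_range (fun t => F (t + 1) a - F t a)]
        refine Finset.sum_congr rfl (fun t _ => ?_)
        rw [h2 t a, CharTwo.sub_eq_add, add_comm]
      rw [this, Finset.sum_range_sub (fun t => F t a)]
      have hFm : F m a = 0 := by simp [hF]
      have hF0 : F 0 a = V 0 a := by simp [hF, Nat.pos_of_ne_zero (NeZero.ne m)]
      rw [hFm, hF0, zero_sub, CharTwo.neg_eq]
    set f : Fin n → ZMod 2 := e0 + ∑ t : Fin m, vecMul (U t) S with hf
    have hstep : ∀ t : Fin m, HX.mulVec (vecMul (U t) S) = T.mulVec (HG.mulVec (U t)) := by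
      intro t
      rw [← Matrix.mulVec_transpose, Matrix.mulVec_mulVec, hcompat, ← Matrix.mulVec_mulVec]
    have hHXf : HX.mulVec f = 0 := by
      rw [hf, Matrix.mulVec_add, mulVec_sum', Finset.sum_congr rfl (fun t _ => hstep t),
        ← mulVec_sum', hsum]
      exact h1
    have hJXf : JX.mulVec f = (JMBX m JX S (rG := rG)).mulVec e := by
      funext a
      have hstep2 : ∀ t : Fin m, JX.mulVec (vecMul (U t) S) = (JX * Sᵀ).mulVec (U t) := by
        intro t
        rw [← Matrix.mulVec_transpose, Matrix.mulVec_mulVec]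
      rw [hf, Matrix.mulVec_add, mulVec_sum', Finset.sum_congr rfl (fun t _ => hstep2 t)]
      simp only [JMBX, Matrix.mulVec, dotProduct, Fintype.sum_sum_type, Fintype.sum_prod_type,
        Matrix.of_apply, mul_zero, zero_mul, Finset.sum_const_zero, add_zero, Pi.add_apply,
        Finset.sum_apply, he0, hU]
    have hdf : d ≤ wt f := hdX f hHXf (by rw [hJXf]; exact hJ)
    have hwtf : wt f ≤ wt e0 + ∑ t : Fin m, wt (vecMul (U t) S) := by
      refine le_trans (wt_add_le _ _) ?_
      have := wt_sum_le (Finset.univ : Finset (Fin m)) (fun t => vecMul (U t) S)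
      omega
    have hwt2 : (∑ t : Fin m, wt (vecMul (U t) S)) ≤ w * ∑ t : Fin m, wt (U t) := by
      rw [Finset.mul_sum]
      exact Finset.sum_le_sum fun t _ => hwS (U t)
    have hwe : wt e = wt e0 + ((∑ t : Fin m, wt (U t))
        + wt (fun p : Fin m × Fin rG => e (Sum.inr (Sum.inr p)))) := by
      rw [wt_sum_type e, wt_sum_type (fun j => e (Sum.inr j)),
        wt_prod_type (fun p : Fin m × Fin nG => e (Sum.inr (Sum.inl p)))]
    have h7 : wt e0 ≤ w * wt e0 := Nat.le_mul_of_pos_left _ hw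
    calc d ≤ wt f := hdf
      _ ≤ wt e0 + w * ∑ t : Fin m, wt (U t) := by omega
      _ ≤ w * wt e0 + w * ∑ t : Fin m, wt (U t)
          + w * wt (fun p : Fin m × Fin rG => e (Sum.inr (Sum.inr p))) := by
        have := Nat.zero_le (w * wt (fun p : Fin m × Fin rG => e (Sum.inr (Sum.inr p))))
        omega
      _ = w * wt e := by rw [hwe]; ring
  · intro e hH hJ
    have h1 : HZ.mulVec (fun j => e (Sum.inl j)) = 0 := by
      funext a
      have h := congrFun hH (Sum.inl a)
      simp only [HMBZ, Matrix.mulVec, dotProduct, Fintype.sum_sum_type,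
        Matrix.of_apply, Pi.zero_apply, zero_mul, Finset.sum_const_zero, add_zero] at h
      simpa [Matrix.mulVec, dotProduct] using h
    have h2 : JZ.mulVec (fun j => e (Sum.inl j)) ≠ 0 := by
      intro h0
      apply hJ
      funext a
      have h := congrFun h0 a
      simp only [Matrix.mulVec, dotProduct, Pi.zero_apply] at h
      simp only [JMBZ, Matrix.mulVec, dotProduct, Fintype.sum_sum_type,
        Matrix.of_apply, Pi.zero_apply, zero_mul, Finset.sum_const_zero, add_zero]
      exact h
    refine le_trans (hdZ _ h1 h2) ?_
    rw [wt_sum_type e]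
    omega
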